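/- A family a_P = {a_λ : λ ∈ P} of scalars satisfies the classical Plücker relations if and only if for all partitions α and β: Σ_{i,j ≥ 1, |α^{(i)}|+|β^{(−j)}|=|α|+|β|+1} (−1)^{|α|−|α^{(i)}|+i+j} a_{α^{(i)}} · a_{β^{(−j)}} = 0. -/

import Mathlib

open scoped BigOperators
open scoped Classical

namespace Paper

/-! ### Partitions

A partition `λ = (λ_1 ≥ λ_2 ≥ ⋯ ≥ λ_n > 0)` is encoded as the weakly decreasing,
eventually-zero function `f : ℕ → ℕ` with `f k = λ_{k+1}` (0-based indexing of parts,
parts beyond the length being `0`). -/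

def IsPartition (f : ℕ → ℕ) : Prop :=
  (∀ ⦃i j : ℕ⦄, i ≤ j → f j ≤ f i) ∧ ∃ N, ∀ k, N ≤ k → f k = 0

/-- `|λ|`, the size of the partition. -/
noncomputable def psize (f : ℕ → ℕ) : ℕ := ∑ᶠ k, f k

/-- `u_i(λ) = #{k ≥ 1 : λ_k ≥ i}`, the number of parts of `λ` that are at least `i`. -/
noncomputable def numParts (f : ℕ → ℕ) (i : ℕ) : ℕ := Nat.card {k | i ≤ f k}

/-- `l(λ)`, the number of (positive) parts. -/
noncomputable def plength (f : ℕ → ℕ) : ℕ := numParts f 1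

/-- The conjugate partition: `λ'_i = #{k : λ_k ≥ i}` (0-based: `conj f i = λ'_{i+1}`). -/
noncomputable def conj (f : ℕ → ℕ) : ℕ → ℕ := fun i => numParts f (i + 1)

/-- `λ^{(i)} = (λ_1 − 1, …, λ_j − 1, i − 1, λ_{j+1}, …, λ_n)` where `j = u_i(λ)` is the
unique index with `λ_j ≥ i > λ_{j+1}` (switch the `i`-th R of the code to U). -/
noncomputable def swR (f : ℕ → ℕ) (i : ℕ) : ℕ → ℕ := fun k =>
  if k < numParts f i then f k - 1
  else if k = numParts f i then i - 1
  else f (k - 1)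

/-- `λ^{(−i)} = (λ_1 + 1, …, λ_{i−1} + 1, λ_{i+1}, λ_{i+2}, …)` (switch the `i`-th U of the
code, from the right, to R). -/
def swU (f : ℕ → ℕ) (i : ℕ) : ℕ → ℕ := fun k =>
  if k + 1 < i then f k + 1 else f (k + 1)

/-! ### Strips, the sets `𝓡_{λ,μ}` and the signed counts `R_{λ,μ}` -/

/-- `λ − ν` is a vertical strip (at most one square per row); includes `ν ⊆ λ`. -/
def VStrip (f g : ℕ → ℕ) : Prop := ∀ k, g k ≤ f k ∧ f k ≤ g k + 1

/-- `μ − ν` is a horizontal strip (at most one square per column); includes `ν ⊆ μ`. -/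
def HStrip (f g : ℕ → ℕ) : Prop := ∀ k, f (k + 1) ≤ g k ∧ g k ≤ f k

/-- `𝓡_{λ,μ}`: partitions `ν` with `λ − ν` a vertical strip and `μ − ν` a horizontal strip. -/
def RSet (l m : ℕ → ℕ) : Set (ℕ → ℕ) :=
  {nu | IsPartition nu ∧ VStrip l nu ∧ HStrip m nu}

/-- `R_{λ,μ} = Σ_{ν ∈ 𝓡_{λ,μ}} (−1)^{|λ|−|ν|}` (zero when the set is empty). -/
noncomputable def Rnum (l m : ℕ → ℕ) : ℤ :=
  ∑ᶠ nu ∈ RSet l m, (-1 : ℤ) ^ (psize l - psize nu)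

/-- The square in row `r`, column `c` (0-based) is a `λ`-ambiguous square of `μ`:
it lies in both diagrams, is rightmost in its row of `λ` and bottommost in its column of `μ`. -/
def Ambiguous (l m : ℕ → ℕ) (r c : ℕ) : Prop :=
  c + 1 = l r ∧ m (r + 1) ≤ c ∧ c + 1 ≤ m r

/-- `μ` is a `λ`-survivor: `𝓡_{λ,μ}` is nonempty and `μ` has no `λ`-ambiguous squares. -/
def Survivor (l m : ℕ → ℕ) : Prop :=
  (RSet l m).Nonempty ∧ ∀ r c, ¬ Ambiguous l m r c

noncomputable section

/-! ### The algebra of symmetric functions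

`Λ_ℚ = ℚ[p_1, p_2, …]` realized as `MvPolynomial ℕ ℚ`, the variable `X k`
representing the power sum `p_{k+1}`. -/

abbrev SymAlg : Type := MvPolynomial ℕ ℚ

/-- The power sum `p_n` (with `p_0 = 1`). -/
def pp (n : ℕ) : SymAlg := if n = 0 then 1 else MvPolynomial.X (n - 1)

/-- `p_λ` for a multiset of parts. -/
def pMul (s : Multiset ℕ) : SymAlg := (s.map pp).prod

/-- `|Aut λ| = ∏_j f_j!` for a multiset with multiplicities `f_j`. -/
def autF (s : Multiset ℕ) : ℕ := (s.dedup.map fun v => (s.count v).factorial).prod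

/-- `z_λ = ∏_j j^{f_j} f_j!`. -/
def zee (s : Multiset ℕ) : ℕ := s.prod * autF s

/-- The complete symmetric function `h_n = Σ_{λ ⊢ n} z_λ^{-1} p_λ`
(equivalently, `Σ_n h_n t^n = exp Σ_{k≥1} p_k t^k / k`). -/
def hh (n : ℕ) : SymAlg :=
  ∑ P : Nat.Partition n, ((zee P.parts : ℚ)⁻¹) • pMul P.parts

/-- The elementary symmetric function `e_n = Σ_{λ ⊢ n} (−1)^{n−l(λ)} z_λ^{-1} p_λ`
(equivalently, `Σ_n e_n t^n = exp Σ_{k≥1} (−1)^{k−1} p_k t^k / k`). -/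
def ee (n : ℕ) : SymAlg :=
  ∑ P : Nat.Partition n,
    (((-1 : ℚ) ^ (n - Multiset.card P.parts)) * (zee P.parts : ℚ)⁻¹) • pMul P.parts

/-- `perp f g = f^⊥ g`: the adjoint of multiplication by `f` with respect to the Hall
inner product, given explicitly by substituting `p_n^⊥ = n ∂/∂p_n` multiplicatively in `f`. -/
def perp (f g : SymAlg) : SymAlg :=
  ∑ m ∈ f.support, ∑ m' ∈ g.support,
    (MvPolynomial.coeff m f * MvPolynomial.coeff m' g *
      m.prod fun k a => ((k + 1 : ℚ)) ^ a * ((m' k).descFactorial a : ℚ)) •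
      (MvPolynomial.monomial (m' - m) (1 : ℚ))

/-- The weight (degree in the `x`'s) of a `p`-monomial: `p_1^{a_1} p_2^{a_2} ⋯ ↦ Σ k a_k`. -/
def wtm (m : ℕ →₀ ℕ) : ℕ := m.sum fun k a => (k + 1) * a

/-- The maximal weight of a monomial of `f`. -/
def wt (f : SymAlg) : ℕ := f.support.sup wtm

/-- The Bernstein operator `B_n = Σ_{m ≥ 0, n+m ≥ 0} (−1)^m h_{n+m} e_m^⊥`
(the sum is finite on each `f`: terms with `m > wt f` act as zero, which justifies
the truncation). -/
def BOp (n : ℤ) (f : SymAlg) : SymAlg :=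
  ∑ m ∈ Finset.range (wt f + 1),
    if 0 ≤ n + (m : ℤ) then
      ((-1 : ℚ) ^ m) • (hh (n + (m : ℤ)).toNat * perp (ee m) f)
    else 0

/-- The adjoint Bernstein operator `B_n^⊥ = Σ_{m ≥ 0, n+m ≥ 0} (−1)^m e_m h_{n+m}^⊥`. -/
def BpOp (n : ℤ) (f : SymAlg) : SymAlg :=
  ∑ m ∈ Finset.range (wt f + (-n).toNat + 1),
    if 0 ≤ n + (m : ℤ) then
      ((-1 : ℚ) ^ m) • (ee m * perp (hh (n + (m : ℤ)).toNat) f)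
    else 0

/-- The involution `ω` of `Λ_ℚ` (with `ω e_n = h_n`); on power sums,
`ω p_n = (−1)^{n−1} p_n`. -/
def omegaMap : SymAlg →ₐ[ℚ] SymAlg :=
  MvPolynomial.aeval fun k => ((-1 : ℚ) ^ k) • MvPolynomial.X k

/-- `h_k` for integer index, vanishing for `k < 0`. -/
def hz (k : ℤ) : SymAlg := if k < 0 then 0 else hh k.toNat

/-- The Schur function `s_λ`, via the Jacobi–Trudi determinant
`s_λ = det(h_{λ_i − i + j})_{1 ≤ i,j ≤ l(λ)}`. -/
def schur (f : ℕ → ℕ) : SymAlg :=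
  Matrix.det (Matrix.of fun i j : Fin (plength f) =>
    hz ((f i : ℤ) - (i : ℤ) + (j : ℤ)))

/-! ### The graded completion of `Λ_ℚ`, as multivariate formal power series in the `p`'s -/

abbrev SymSeries : Type := MvPowerSeries ℕ ℚ

def coeffS (m : ℕ →₀ ℕ) (g : SymSeries) : ℚ := MvPowerSeries.coeff m g

/-- `f^⊥` acting on a formal series, coefficientwise. -/
def perpS (f : SymAlg) (g : SymSeries) : SymSeries := fun m'' =>
  ∑ m ∈ f.support,
    MvPolynomial.coeff m f * coeffS (m'' + m) g *
      m.prod fun k a => ((k + 1 : ℚ)) ^ a * (((m'' + m) k).descFactorial a : ℚ)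

/-- `B_n = Σ_{m ≥ 0, n+m ≥ 0} (−1)^m h_{n+m} e_m^⊥` acting on the completion, defined
coefficientwise (the term `m` contributes to the coefficient of a monomial `m''` only
when `n + m ≤ wtm m''`, which justifies the truncation). -/
def BS (n : ℤ) (g : SymSeries) : SymSeries := fun m'' =>
  ∑ m ∈ Finset.range (wtm m'' + (-n).toNat + 1),
    if 0 ≤ n + (m : ℤ) then
      ((-1 : ℚ) ^ m) *
        coeffS m'' (((hh (n + (m : ℤ)).toNat : SymAlg) : SymSeries) * perpS (ee m) g)
    else 0

/-- `B_n^⊥ = Σ_{m ≥ 0, n+m ≥ 0} (−1)^m e_m h_{n+m}^⊥` acting on the completion. -/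
def BpS (n : ℤ) (g : SymSeries) : SymSeries := fun m'' =>
  ∑ m ∈ Finset.range (wtm m'' + 1),
    if 0 ≤ n + (m : ℤ) then
      ((-1 : ℚ) ^ m) *
        coeffS m'' (((ee m : SymAlg) : SymSeries) * perpS (hh (n + (m : ℤ)).toNat) g)
    else 0

/-- The formal sum `Σ_{λ ∈ 𝒫} a_λ s_λ` (each coefficient is a genuinely finite sum,
since only the finitely many partitions of `wtm m` contribute at a monomial `m`). -/
def schurSeries (a : (ℕ → ℕ) → ℚ) : SymSeries := fun m =>
  ∑ᶠ f : ℕ → ℕ, if IsPartition f then a f * MvPolynomial.coeff m (schur f) else 0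

/-! ### Two independent families of power sums `p`, `p̂`, for the KP bilinear identity.
Here `X (Sum.inl k) = p_{k+1}` and `X (Sum.inr k) = p̂_{k+1}`. -/

abbrev BiSeries : Type := MvPowerSeries (ℕ ⊕ ℕ) ℚ

def coeffB (m : (ℕ ⊕ ℕ) →₀ ℕ) (g : BiSeries) : ℚ := MvPowerSeries.coeff m g

/-- `τ(p)`: a series in the `p`'s viewed inside the two-variable-family algebra. -/
def liftL (g : SymSeries) : BiSeries := fun m =>
  if ∀ v ∈ m.support, Sum.isLeft v = true then
    coeffS (Finsupp.comapDomain Sum.inl m Sum.inl_injective.injOn) g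
  else 0

/-- `τ(p̂)`: a series in the `p̂`'s viewed inside the two-variable-family algebra. -/
def liftR (g : SymSeries) : BiSeries := fun m =>
  if ∀ v ∈ m.support, Sum.isRight v = true then
    coeffS (Finsupp.comapDomain Sum.inr m Sum.inr_injective.injOn) g
  else 0

/-- Formal partial derivative `∂/∂X_v` on the two-family power series algebra. -/
def DV (v : ℕ ⊕ ℕ) (g : BiSeries) : BiSeries := fun m =>
  ((m v : ℚ) + 1) * coeffB (m + Finsupp.single v 1) g

/-- `∂/∂p_i − ∂/∂p̂_i` (for `i ≥ 1`). -/
def dd (i : ℕ) (g : BiSeries) : BiSeries :=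
  DV (Sum.inl (i - 1)) g - DV (Sum.inr (i - 1)) g

/-- Composition of the commuting operators `∂/∂p_i − ∂/∂p̂_i` over a list of indices. -/
def dProd (s : List ℕ) : BiSeries → BiSeries := s.foldr (fun i F => dd i ∘ F) id

/-- The coefficient of `y^n` in `exp(−Σ_{k≥1} y^k (∂/∂p_k − ∂/∂p̂_k))`, namely
`Σ_{λ ⊢ n} (−1)^{l(λ)} (∏_j f_j!)^{-1} ∏_i (∂/∂p_{λ_i} − ∂/∂p̂_{λ_i})`. -/
def DD (n : ℕ) (g : BiSeries) : BiSeries :=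
  ∑ P : Nat.Partition n,
    (((-1 : ℚ) ^ (Multiset.card P.parts)) * ((autF P.parts : ℚ))⁻¹) •
      dProd (P.parts.sort (· ≤ ·)) g

/-- The coefficient of `t^n` in `exp(Σ_{k≥1} (t^k/k)(p_k − p̂_k))`, namely
`Σ_{λ ⊢ n} z_λ^{-1} ∏_i (p_{λ_i} − p̂_{λ_i})`. -/
def GG (n : ℕ) : MvPolynomial (ℕ ⊕ ℕ) ℚ :=
  ∑ P : Nat.Partition n,
    ((zee P.parts : ℚ)⁻¹) •
      (P.parts.map fun i =>
        (MvPolynomial.X (Sum.inl (i - 1)) - MvPolynomial.X (Sum.inr (i - 1)) :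
          MvPolynomial (ℕ ⊕ ℕ) ℚ)).prod

def wtB (m : (ℕ ⊕ ℕ) →₀ ℕ) : ℕ := m.sum fun v a => (Sum.elim (· + 1) (· + 1) v) * a

def wtL (m : (ℕ ⊕ ℕ) →₀ ℕ) : ℕ := m.sum fun v a => (Sum.elim (· + 1) (fun _ => 0) v) * a

def wtR (m : (ℕ ⊕ ℕ) →₀ ℕ) : ℕ := m.sum fun v a => (Sum.elim (fun _ => 0) (· + 1) v) * a

/-- The left-hand side
`[t^{-1}] exp(Σ_{k≥1} (t^k/k)(p_k − p̂_k)) exp(−Σ_{k≥1} t^{-k}(∂/∂p_k − ∂/∂p̂_k)) τ(p) τ(p̂)`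
of the KP bilinear equation, i.e. `Σ_{n≥0} G_n · D_{n+1} (τ(p)τ(p̂))`, defined
coefficientwise (only `n ≤ wtB m` contributes at a monomial `m`, since `G_n` is
homogeneous of weight `n`). -/
def KPLHS (tau : SymSeries) : BiSeries := fun m =>
  ∑ n ∈ Finset.range (wtB m + 1),
    coeffB m (((GG n : MvPolynomial (ℕ ⊕ ℕ) ℚ) : BiSeries) *
      DD (n + 1) (liftL tau * liftR tau))

/-- `τ` is a `τ`-function for the KP hierarchy: it satisfies the KP bilinear equation. -/
def IsTau (tau : SymSeries) : Prop := KPLHS tau = 0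

/-- `[t^{-1}] (B(t) τ(p)) · (B̂^⊥(t^{-1}) τ(p̂)) = Σ_{n ∈ ℤ} (B_n τ)(p) · (B̂^⊥_{n+1} τ)(p̂)`,
defined coefficientwise (at a monomial `m` only `−wtR m − 1 ≤ n ≤ wtL m` contributes,
which justifies the truncation; `n = j − wtR m − 1`). -/
def prodRHS (tau : SymSeries) : BiSeries := fun m =>
  ∑ j ∈ Finset.range (wtL m + wtR m + 2),
    coeffB m (liftL (BS ((j : ℤ) - (wtR m : ℤ) - 1) tau) *
      liftR (BpS ((j : ℤ) - (wtR m : ℤ)) tau))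

/-! ### The Plücker relations -/

/-- The condition on `ℓ` in the classical Plücker relations: `0 ≤ ℓ ≤ m − 1` and
`α_ℓ − 1 ≥ β_{k+1} − k + ℓ + 1 ≥ α_{ℓ+1}` (1-based, conventions `α_0 = ∞`, `α_m = −∞`)
and `β_{k+1} − k + ℓ + 1 ≥ 0`. -/
def PCond (m : ℕ) (α β : ℕ → ℕ) (k ℓ : ℕ) : Prop :=
  ℓ + 1 ≤ m ∧
  (ℓ = 0 ∨ ((β k : ℤ) - (k : ℤ) + ℓ + 1 ≤ (α (ℓ - 1) : ℤ) - 1)) ∧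
  (ℓ + 1 = m ∨ ((α ℓ : ℤ) ≤ (β k : ℤ) - (k : ℤ) + ℓ + 1)) ∧
  0 ≤ (β k : ℤ) - (k : ℤ) + ℓ + 1

/-- The term indexed by `k` in a classical Plücker relation:
`(−1)^{k−m+1+ℓ} a_{(α_1−1,…,α_ℓ−1, β_{k+1}−k+ℓ+1, α_{ℓ+1},…,α_{m−1})}
 · a_{(β_1+1,…,β_k+1, β_{k+2},…,β_{m+1})}`
for the unique admissible `ℓ` (identically `0` when no `ℓ` exists). -/
def cterm (a : (ℕ → ℕ) → ℚ) (m : ℕ) (α β : ℕ → ℕ) (k : ℕ) : ℚ :=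
  if h : ∃ ℓ : ℕ, PCond m α β k ℓ then
    ((-1 : ℚ) ^ ((k : ℤ) - (m : ℤ) + 1 + (h.choose : ℤ))) *
      a (fun t => if t < h.choose then α t - 1
          else if t = h.choose then ((β k : ℤ) - (k : ℤ) + h.choose + 1).toNat
          else α (t - 1)) *
      a (fun t => if t < k then β t + 1 else β (t + 1))
  else 0

/-- The classical Plücker relations for a family of scalars indexed by partitions. -/
def ClassicalPlucker (a : (ℕ → ℕ) → ℚ) : Prop :=
  ∀ m : ℕ, 1 ≤ m → ∀ α β : ℕ → ℕ, IsPartition α → IsPartition β →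
    plength α ≤ m - 1 → plength β ≤ m + 1 →
      ∑ k ∈ Finset.range (m + 1), cterm a m α β k = 0

/-- The symmetrical form of the Plücker relations:
for all partitions `α`, `β`,
`Σ_{i,j ≥ 1, |α^{(i)}|+|β^{(−j)}| = |α|+|β|+1} (−1)^{|α|−|α^{(i)}|+i+j} a_{α^{(i)}} a_{β^{(−j)}} = 0`. -/
def SymPlucker (a : (ℕ → ℕ) → ℚ) : Prop :=
  ∀ α β : ℕ → ℕ, IsPartition α → IsPartition β →
    (∑ᶠ (i : ℕ), ∑ᶠ (j : ℕ),
      if 1 ≤ i ∧ 1 ≤ j ∧ psize (swR α i) + psize (swU β j) = psize α + psize β + 1 then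
        ((-1 : ℚ) ^ ((psize α : ℤ) - (psize (swR α i) : ℤ) + (i : ℤ) + (j : ℤ))) *
          a (swR α i) * a (swU β j)
      else 0) = 0

end
end Paper

namespace Paper

/-- A finite lower-closed finset of naturals is an initial segment. -/
lemma mem_iff_lt_card_of_lower (t : Finset ℕ) (hlow : ∀ k ∈ t, ∀ k' ≤ k, k' ∈ t) (k : ℕ) :
    k ∈ t ↔ k < t.card := by
  constructor
  · intro hk
    have hsub : Finset.range (k + 1) ⊆ t := by
      intro x hx
      exact hlow k hk x (Nat.lt_succ_iff.mp (Finset.mem_range.mp hx))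
    have := Finset.card_le_card hsub
    simpa using this
  · intro hk
    by_contra hkt
    have hsub : t ⊆ Finset.range k := by
      intro x hx
      rw [Finset.mem_range]
      by_contra hxk
      exact hkt (hlow x hx k (le_of_not_gt hxk))
    have := Finset.card_le_card hsub
    simp only [Finset.card_range] at this
    omega

lemma lt_numParts_iff {f : ℕ → ℕ} (hf : IsPartition f) {i : ℕ} (hi : 1 ≤ i) (k : ℕ) :
    k < numParts f i ↔ i ≤ f k := by
  obtain ⟨N, hN⟩ := hf.2
  have hfin : {k | i ≤ f k}.Finite := by
    apply Set.Finite.subset (Set.finite_Iio N)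
    intro x hx
    simp only [Set.mem_setOf_eq] at hx
    simp only [Set.mem_Iio]
    by_contra h
    have := hN x (le_of_not_gt h)
    omega
  have hcard : numParts f i = hfin.toFinset.card := by
    rw [numParts, Nat.card_eq_card_finite_toFinset hfin]
  rw [hcard, ← mem_iff_lt_card_of_lower]
  · simp [Set.Finite.mem_toFinset]
  · intro x hx y hy
    simp only [Set.Finite.mem_toFinset, Set.mem_setOf_eq] at *
    exact le_trans hx (hf.1 hy)

lemma numParts_antitone {f : ℕ → ℕ} (hf : IsPartition f) {i i' : ℕ} (hi : 1 ≤ i)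
    (hii' : i ≤ i') : numParts f i' ≤ numParts f i := by
  by_contra h
  push_neg at h
  have h1 := (lt_numParts_iff hf (le_trans hi hii') (numParts f i)).mp h
  have h2 : ¬ i ≤ f (numParts f i) := fun hc =>
    lt_irrefl _ ((lt_numParts_iff hf hi _).mpr hc)
  omega

lemma part_eq_zero_of_plength_le {f : ℕ → ℕ} (hf : IsPartition f) {t : ℕ}
    (ht : plength f ≤ t) : f t = 0 := by
  have h2 : ¬ (1 : ℕ) ≤ f t := fun hc => by
    have := (lt_numParts_iff hf le_rfl t).mpr hc
    rw [← plength] at this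
    omega
  omega

lemma psize_eq_sum {f : ℕ → ℕ} {N : ℕ} (hN : ∀ k, N ≤ k → f k = 0) :
    psize f = ∑ k ∈ Finset.range N, f k := by
  rw [psize]
  apply finsum_eq_sum_of_support_subset
  intro x hx
  simp only [Function.mem_support] at hx
  simp only [Finset.coe_range, Set.mem_Iio]
  by_contra h
  exact hx (hN x (le_of_not_gt h))

lemma sum_shift_aux (f : ℕ → ℕ) (u N : ℕ) (h : u ≤ N) :
    ∑ k ∈ Finset.Ico (u + 1) (N + 1), f (k - 1) = ∑ k ∈ Finset.Ico u N, f k := by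
  rw [Finset.sum_Ico_eq_sum_range, Finset.sum_Ico_eq_sum_range]
  simp only [Nat.add_sub_cancel, Nat.succ_sub_succ]
  apply Finset.sum_congr rfl
  intro x _
  congr 1
  omega

lemma psize_swR {f : ℕ → ℕ} (hf : IsPartition f) {i : ℕ} (hi : 1 ≤ i) :
    psize (swR f i) + numParts f i = psize f + (i - 1) := by
  obtain ⟨N, hN⟩ := hf.2
  have hparts : ∀ k < numParts f i, i ≤ f k := fun k hk =>
    (lt_numParts_iff hf hi k).mp hk
  set u := numParts f i with hu
  have huN : u ≤ N := by
    by_contra h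
    push_neg at h
    have h1 := hparts N h
    have h2 := hN N le_rfl
    omega
  have h1 : psize f = ∑ k ∈ Finset.range N, f k := psize_eq_sum hN
  have h2 : psize (swR f i) = ∑ k ∈ Finset.range (N + 1), swR f i k := by
    apply psize_eq_sum
    intro k hk
    have hk1 : ¬ k < u := by omega
    have hk2 : ¬ k = u := by omega
    simp only [swR, ← hu, if_neg hk1, if_neg hk2]
    exact hN (k - 1) (by omega)
  have hsplit1 : ∑ k ∈ Finset.range (N + 1), swR f i k =
      (∑ k ∈ Finset.range u, swR f i k) + ∑ k ∈ Finset.Ico u (N + 1), swR f i k := by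
    rw [Finset.range_eq_Ico, Finset.range_eq_Ico, Finset.sum_Ico_consecutive _ (Nat.zero_le u) (by omega)]
  have hsplit2 : ∑ k ∈ Finset.Ico u (N + 1), swR f i k =
      swR f i u + ∑ k ∈ Finset.Ico (u + 1) (N + 1), swR f i k :=
    Finset.sum_eq_sum_Ico_succ_bot (by omega) _
  have hA : ∑ k ∈ Finset.range u, swR f i k = ∑ k ∈ Finset.range u, (f k - 1) := by
    apply Finset.sum_congr rfl
    intro k hk
    rw [Finset.mem_range] at hk
    simp only [swR, ← hu, if_pos hk]
  have hB : swR f i u = i - 1 := by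
    simp [swR, ← hu]
  have hC : ∑ k ∈ Finset.Ico (u + 1) (N + 1), swR f i k =
      ∑ k ∈ Finset.Ico u N, f k := by
    rw [← sum_shift_aux f u N huN]
    apply Finset.sum_congr rfl
    intro k hk
    rw [Finset.mem_Ico] at hk
    have hk1 : ¬ k < u := by omega
    have hk2 : ¬ k = u := by omega
    simp only [swR, ← hu, if_neg hk1, if_neg hk2]
  have hD : (∑ k ∈ Finset.range u, (f k - 1)) + u = ∑ k ∈ Finset.range u, f k := by
    have : ∀ k ∈ Finset.range u, (f k - 1) + 1 = f k := by
      intro k hk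
      rw [Finset.mem_range] at hk
      have := hparts k hk
      omega
    calc (∑ k ∈ Finset.range u, (f k - 1)) + u
        = ∑ k ∈ Finset.range u, ((f k - 1) + 1) := by
          rw [Finset.sum_add_distrib, Finset.sum_const, Finset.card_range, smul_eq_mul,
            mul_one]
      _ = ∑ k ∈ Finset.range u, f k := Finset.sum_congr rfl this
  have hE : ∑ k ∈ Finset.range N, f k =
      (∑ k ∈ Finset.range u, f k) + ∑ k ∈ Finset.Ico u N, f k := by
    rw [Finset.range_eq_Ico, Finset.range_eq_Ico, Finset.sum_Ico_consecutive _ (Nat.zero_le u) huN]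
  omega

lemma psize_swU {f : ℕ → ℕ} (hf : IsPartition f) {j : ℕ} (hj : 1 ≤ j) :
    psize (swU f j) + f (j - 1) = psize f + (j - 1) := by
  obtain ⟨N, hN⟩ := hf.2
  set d := j - 1 with hd
  set M := N + d with hM
  have h1 : psize f = ∑ k ∈ Finset.range (M + 1), f k :=
    psize_eq_sum (fun k hk => hN k (by omega))
  have h2 : psize (swU f j) = ∑ k ∈ Finset.range M, swU f j k := by
    apply psize_eq_sum
    intro k hk
    have hk1 : ¬ k + 1 < j := by omega
    simp only [swU, if_neg hk1]
    exact hN (k + 1) (by omega)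
  have hsplit1 : ∑ k ∈ Finset.range M, swU f j k =
      (∑ k ∈ Finset.range d, swU f j k) + ∑ k ∈ Finset.Ico d M, swU f j k := by
    rw [Finset.range_eq_Ico, Finset.range_eq_Ico, Finset.sum_Ico_consecutive _ (Nat.zero_le d) (by omega)]
  have hA : ∑ k ∈ Finset.range d, swU f j k =
      (∑ k ∈ Finset.range d, f k) + d := by
    have : ∀ k ∈ Finset.range d, swU f j k = f k + 1 := by
      intro k hk
      rw [Finset.mem_range] at hk
      simp only [swU, if_pos (by omega : k + 1 < j)]
    rw [Finset.sum_congr rfl this, Finset.sum_add_distrib, Finset.sum_const,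
      Finset.card_range, smul_eq_mul, mul_one]
  have hB : ∑ k ∈ Finset.Ico d M, swU f j k = ∑ k ∈ Finset.Ico (d + 1) (M + 1), f k := by
    have step : ∑ k ∈ Finset.Ico d M, swU f j k = ∑ k ∈ Finset.Ico d M, f (k + 1) := by
      apply Finset.sum_congr rfl
      intro k hk
      rw [Finset.mem_Ico] at hk
      have hk1 : ¬ k + 1 < j := by omega
      simp only [swU, if_neg hk1]
    rw [step, Finset.sum_Ico_eq_sum_range, Finset.sum_Ico_eq_sum_range]
    simp only [Nat.succ_sub_succ]
    apply Finset.sum_congr rfl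
    intro x _
    congr 1
    omega
  have hE : ∑ k ∈ Finset.range (M + 1), f k =
      (∑ k ∈ Finset.range d, f k) + f d + ∑ k ∈ Finset.Ico (d + 1) (M + 1), f k := by
    rw [Finset.range_eq_Ico,
      ← Finset.sum_Ico_consecutive f (Nat.zero_le (d + 1)) (by omega : d + 1 ≤ M + 1),
      ← Finset.range_eq_Ico, Finset.sum_range_succ]
  omega

lemma PCond_unique {m : ℕ} {α β : ℕ → ℕ} (hα : IsPartition α) {k ℓ ℓ' : ℕ}
    (h : PCond m α β k ℓ) (h' : PCond m α β k ℓ') : ℓ = ℓ' := by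
  by_contra hne
  wlog hlt : ℓ < ℓ' generalizing ℓ ℓ'
  · exact this h' h (Ne.symm hne) (by omega)
  obtain ⟨hm, hdisj1, hdisj2, hc⟩ := h
  obtain ⟨hm', hdisj1', hdisj2', hc'⟩ := h'
  have h2 : (α ℓ : ℤ) ≤ (β k : ℤ) - (k : ℤ) + ℓ + 1 := by
    rcases hdisj2 with h | h
    · omega
    · exact h
  have h1 : (β k : ℤ) - (k : ℤ) + ℓ' + 1 ≤ (α (ℓ' - 1) : ℤ) - 1 := by
    rcases hdisj1' with h | h
    · omega
    · exact h
  have hmono : α (ℓ' - 1) ≤ α ℓ := hα.1 (by omega)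
  have hmono' : (α (ℓ' - 1) : ℤ) ≤ (α ℓ : ℤ) := by exact_mod_cast hmono
  omega

lemma key_sum (a : (ℕ → ℕ) → ℚ) (m : ℕ) (hm : 1 ≤ m) (α β : ℕ → ℕ)
    (hα : IsPartition α) (hβ : IsPartition β)
    (hlα : plength α ≤ m - 1) (hlβ : plength β ≤ m + 1) :
    (∑ᶠ (i : ℕ), ∑ᶠ (j : ℕ),
      if 1 ≤ i ∧ 1 ≤ j ∧ psize (swR α i) + psize (swU β j) = psize α + psize β + 1 then
        ((-1 : ℚ) ^ ((psize α : ℤ) - (psize (swR α i) : ℤ) + (i : ℤ) + (j : ℤ))) *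
          a (swR α i) * a (swU β j)
      else 0)
    = (-1 : ℚ) ^ (m + 1) * ∑ k ∈ Finset.range (m + 1), cterm a m α β k := by
  set T : ℕ → ℕ → ℚ := fun i j =>
    if 1 ≤ i ∧ 1 ≤ j ∧ psize (swR α i) + psize (swU β j) = psize α + psize β + 1 then
      ((-1 : ℚ) ^ ((psize α : ℤ) - (psize (swR α i) : ℤ) + (i : ℤ) + (j : ℤ))) *
        a (swR α i) * a (swU β j)
    else 0 with hT
  set B : ℕ := plength α + β 0 + m + 5 with hB
  -- characterization of the support condition
  have hCiff : ∀ i j, 1 ≤ i → 1 ≤ j →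
      ((psize (swR α i) + psize (swU β j) = psize α + psize β + 1) ↔
       (i + j = 3 + numParts α i + β (j - 1))) := by
    intro i j hi hj
    have h1 := psize_swR hα hi
    have h2 := psize_swU hβ hj
    omega
  have hlen : ∀ i, 1 ≤ i → numParts α i ≤ plength α := by
    intro i hi
    exact numParts_antitone hα le_rfl hi
  have hbound : ∀ i j, 1 ≤ i → 1 ≤ j → i + j = 3 + numParts α i + β (j - 1) →
      i < B ∧ j < B := by
    intro i j hi hj heq
    have h1 := hlen i hi
    have h2 : β (j - 1) ≤ β 0 := hβ.1 (Nat.zero_le _)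
    omega
  have huniq : ∀ k i i', 1 ≤ i → 1 ≤ i' →
      i + (k + 1) = 3 + numParts α i + β k → i' + (k + 1) = 3 + numParts α i' + β k →
      i = i' := by
    intro k i i' hi hi' h1 h2
    rcases lt_trichotomy i i' with h | h | h
    · have := numParts_antitone hα hi (le_of_lt h)
      omega
    · exact h
    · have := numParts_antitone hα hi' (le_of_lt h)
      omega
  -- the main per-column computation
  have hmain : ∀ k, k ≤ m →
      (∑ i ∈ Finset.range B, T i (k + 1)) = (-1 : ℚ) ^ (m + 1) * cterm a m α β k := by
    intro k hk
    by_cases hex : ∃ ℓ, PCond m α β k ℓ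
    · have hP := hex.choose_spec
      set ℓ₀ := hex.choose with hℓ₀def
      obtain ⟨hℓm, hd1, hd2, hc0⟩ := hP
      set c : ℤ := (β k : ℤ) - (k : ℤ) + (ℓ₀ : ℤ) + 1 with hcdef
      set i₀ : ℕ := c.toNat + 1 with hi₀def
      have hci : (i₀ : ℤ) = c + 1 := by
        rw [hi₀def]
        push_cast
        omega
      have hi₀1 : 1 ≤ i₀ := by omega
      have hαℓ : α ℓ₀ < i₀ := by
        rcases hd2 with h | h
        · have h' : plength α ≤ ℓ₀ := by omega
          have := part_eq_zero_of_plength_le hα h'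
          omega
        · omega
      have hu : numParts α i₀ = ℓ₀ := by
        have hiu1 : ¬ (ℓ₀ < numParts α i₀) := by
          rw [lt_numParts_iff hα hi₀1]
          omega
        rcases hd1 with h | h
        · omega
        · have hα' : (i₀ : ℤ) ≤ (α (ℓ₀ - 1) : ℤ) := by omega
          have hα'' : i₀ ≤ α (ℓ₀ - 1) := by exact_mod_cast hα'
          have : ℓ₀ - 1 < numParts α i₀ := by
            rw [lt_numParts_iff hα hi₀1]
            exact hα''
          omega
      have hCi₀ : i₀ + (k + 1) = 3 + numParts α i₀ + β k := by
        rw [hu]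
        omega
      have hi₀B : i₀ ∈ Finset.range B := by
        rw [Finset.mem_range]
        exact (hbound i₀ (k + 1) hi₀1 (by omega)
          (by simpa using hCi₀)).1
      rw [Finset.sum_eq_single_of_mem i₀ hi₀B]
      · -- value at i₀
        have hpsR := psize_swR hα hi₀1
        have hswR : swR α i₀ = fun t => if t < ℓ₀ then α t - 1
            else if t = ℓ₀ then ((β k : ℤ) - (k : ℤ) + (ℓ₀ : ℤ) + 1).toNat
            else α (t - 1) := by
          funext t
          simp only [swR, hu]
          simp only [← hcdef, hi₀def, Nat.add_sub_cancel]
        have hswU : swU β (k + 1) = fun t => if t < k then β t + 1 else β (t + 1) := by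
          funext t
          simp only [swU, Nat.add_lt_add_iff_right]
        have hcond : 1 ≤ i₀ ∧ 1 ≤ k + 1 ∧
            psize (swR α i₀) + psize (swU β (k + 1)) = psize α + psize β + 1 := by
          refine ⟨hi₀1, by omega, ?_⟩
          rw [hCiff i₀ (k + 1) hi₀1 (by omega)]
          simpa using hCi₀
        simp only [hT]
        rw [if_pos hcond]
        rw [cterm, dif_pos hex]
        rw [← hℓ₀def, ← hswR, ← hswU]
        have hsign : ((-1 : ℚ) ^ ((psize α : ℤ) - (psize (swR α i₀) : ℤ) + (i₀ : ℤ) + ((k : ℤ) + 1)))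
            = (-1 : ℚ) ^ (m + 1) * (-1 : ℚ) ^ ((k : ℤ) - (m : ℤ) + 1 + (ℓ₀ : ℤ)) := by
          have he : (psize α : ℤ) - (psize (swR α i₀) : ℤ) + (i₀ : ℤ) + ((k : ℤ) + 1)
              = ((k : ℤ) - (m : ℤ) + 1 + (ℓ₀ : ℤ)) + ((m + 1 : ℕ) : ℤ) := by
            have h1 : (psize (swR α i₀) : ℤ) + (numParts α i₀ : ℤ)
                = (psize α : ℤ) + ((i₀ - 1 : ℕ) : ℤ) := by exact_mod_cast hpsR
            rw [hu] at h1
            omega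
          rw [he, zpow_add₀ (by norm_num : (-1 : ℚ) ≠ 0), zpow_natCast]
          ring
        push_cast
        push_cast at hsign
        rw [hsign]
        ring
      · -- other i vanish
        intro i hiB hne
        simp only [hT]
        rw [if_neg]
        rintro ⟨hi1, hj1, heq⟩
        rw [hCiff i (k + 1) hi1 hj1] at heq
        simp only [Nat.add_sub_cancel] at heq
        exact hne (huniq k i i₀ hi1 hi₀1 heq hCi₀)
    · -- no admissible ℓ: all terms vanish
      rw [cterm, dif_neg hex, mul_zero]
      apply Finset.sum_eq_zero
      intro i _
      simp only [hT]
      rw [if_neg]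
      rintro ⟨hi1, hj1, heq⟩
      rw [hCiff i (k + 1) hi1 hj1] at heq
      simp only [Nat.add_sub_cancel] at heq
      apply hex
      set ℓ : ℕ := numParts α i with hℓ
      have hℓlen : ℓ ≤ plength α := hlen i hi1
      have hcval : (β k : ℤ) - (k : ℤ) + (ℓ : ℤ) + 1 = (i : ℤ) - 1 := by omega
      refine ⟨ℓ, by omega, ?_, ?_, by omega⟩
      · by_cases hℓ0 : ℓ = 0
        · exact Or.inl hℓ0
        · right
          have : ℓ - 1 < numParts α i := by omega
          have h1 : i ≤ α (ℓ - 1) := (lt_numParts_iff hα hi1 _).mp this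
          have h1' : (i : ℤ) ≤ (α (ℓ - 1) : ℤ) := by exact_mod_cast h1
          omega
      · right
        have h1 : ¬ i ≤ α ℓ := fun hc => by
          have := (lt_numParts_iff hα hi1 ℓ).mpr hc
          omega
        omega
  -- vanishing outside 1 ≤ j ≤ m + 1
  have hzero : ∀ j, (j = 0 ∨ m + 2 ≤ j) → ∀ i, T i j = 0 := by
    intro j hj i
    simp only [hT]
    rw [if_neg]
    rintro ⟨hi1, hj1, heq⟩
    rw [hCiff i j hi1 hj1] at heq
    rcases hj with rfl | hj
    · omega
    · have h1 := hlen i hi1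
      have h2 : β (j - 1) = 0 := part_eq_zero_of_plength_le hβ (by omega)
      omega
  -- finiteness / conversion of the finsums
  have hTsupp : ∀ i j, T i j ≠ 0 → i < B ∧ j < B := by
    intro i j hTij
    simp only [hT] at hTij
    by_cases hC : 1 ≤ i ∧ 1 ≤ j ∧
        psize (swR α i) + psize (swU β j) = psize α + psize β + 1
    · obtain ⟨hi1, hj1, heq⟩ := hC
      exact hbound i j hi1 hj1 ((hCiff i j hi1 hj1).mp heq)
    · exact absurd (if_neg hC) hTij
  have step1 : ∀ i, (∑ᶠ j, T i j) = ∑ j ∈ Finset.range B, T i j := by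
    intro i
    apply finsum_eq_sum_of_support_subset
    intro j hj
    simp only [Function.mem_support] at hj
    simp only [Finset.coe_range, Set.mem_Iio]
    exact (hTsupp i j hj).2
  have step2 : (∑ᶠ i, ∑ᶠ j, T i j) = ∑ i ∈ Finset.range B, ∑ᶠ j, T i j := by
    apply finsum_eq_sum_of_support_subset
    intro i hi
    simp only [Function.mem_support] at hi
    simp only [Finset.coe_range, Set.mem_Iio]
    by_contra h
    apply hi
    apply finsum_eq_zero_of_forall_eq_zero
    intro j
    by_contra hj
    exact h (hTsupp i j hj).1
  calc (∑ᶠ i, ∑ᶠ j, T i j)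
      = ∑ i ∈ Finset.range B, ∑ j ∈ Finset.range B, T i j := by
        rw [step2]
        exact Finset.sum_congr rfl fun i _ => step1 i
    _ = ∑ j ∈ Finset.range B, ∑ i ∈ Finset.range B, T i j := Finset.sum_comm
    _ = ∑ j ∈ Finset.Ico 1 (m + 2), ∑ i ∈ Finset.range B, T i j := by
        symm
        apply Finset.sum_subset
        · intro j hj
          rw [Finset.mem_Ico] at hj
          rw [Finset.mem_range]
          omega
        · intro j hjB hjI
          rw [Finset.mem_Ico] at hjI
          apply Finset.sum_eq_zero
          intro i _
          exact hzero j (by omega) i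
    _ = ∑ k ∈ Finset.range (m + 1), ∑ i ∈ Finset.range B, T i (1 + k) := by
        rw [Finset.sum_Ico_eq_sum_range]
        norm_num
    _ = ∑ k ∈ Finset.range (m + 1), (-1 : ℚ) ^ (m + 1) * cterm a m α β k := by
        apply Finset.sum_congr rfl
        intro k hk
        rw [Finset.mem_range] at hk
        rw [Nat.add_comm 1 k]
        exact hmain k (by omega)
    _ = (-1 : ℚ) ^ (m + 1) * ∑ k ∈ Finset.range (m + 1), cterm a m α β k := by
        rw [Finset.mul_sum]

end Paper

/-- A family `a_𝒫 = {a_λ}` of scalars satisfies the classical Plücker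
relations if and only if for all partitions `α`, `β`,
`Σ_{i,j ≥ 1, |α^{(i)}|+|β^{(−j)}| = |α|+|β|+1} (−1)^{|α|−|α^{(i)}|+i+j} a_{α^{(i)}} a_{β^{(−j)}} = 0`. -/
theorem Paper.classicalPlucker_iff_symPlucker (a : (ℕ → ℕ) → ℚ) :
    Paper.ClassicalPlucker a ↔ Paper.SymPlucker a := by
  constructor
  · intro h α β hα hβ
    have hm : (1 : ℕ) ≤ Paper.plength α + Paper.plength β + 1 := by omega
    rw [Paper.key_sum a _ hm α β hα hβ (by omega) (by omega),
      h _ hm α β hα hβ (by omega) (by omega), mul_zero]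
  · intro h m hm α β hα hβ hlα hlβ
    have hk := Paper.key_sum a m hm α β hα hβ hlα hlβ
    rw [h α β hα hβ] at hk
    have hne : ((-1 : ℚ) ^ (m + 1)) ≠ 0 := pow_ne_zero _ (by norm_num)
    exact (mul_eq_zero.mp hk.symm).resolve_left hne
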